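/- Existence of a topmost rightmost maximal cut-segment: if Δ is a non-normal derivation in a system of grounding Σ, then there is a topmost maximal cut-segment σ of Δ such that for no cut-segment σ* in Δ is it the case that μ(σ*) = μ(σ) and the lower edge of σ is side-connected with an occurrence in σ* or with a formula occurrence in Δ standing below the lower edge of σ*. -/

import Mathlib

/-!  A formalization of d'Aragona's systems of grounding (Prawitz's theory of grounds).

* `LTerm`, `LFormula` : terms and formulas of the first-order background language `L`
  (with an absurdity constant `bot`).
* `GTerm` : typed terms of the (enriched, possibly expanded) Gentzen language of grounding:
  individual constants `konst i` naming closed atomic derivations, typed ground-variables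
  `xi α i` (ξ^α_i), applied functional variables `fh α x i t` (h^α_{x,i}(t)) and
  `ff α i T` (f^α_i(T)), the primitive operational symbols `andI, orI, impI, allI, exI`,
  the non-primitive ones `andE, orE, impE, allE, exE, botE`, and (for expansions by further
  non-primitive operational symbols) `op i` together with application `app`.
* `GForm` : formulas of the enriched language: `gr T α` ("T : α", i.e. Gr(T,α)),
  `equiv T U` ("T ≡ U"), `botG` (⊥^G) and the logical constants ×, +, ⊃, Π, 𝔈
  (`conj, disj, impl, pi, exi`), quantifying over `GVar`s (individual, typed, functional).
* `Valid base R Γ t` : the tree `t` is a correct derivation, from open assumptions in `Γ`,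
  in the system of grounding determined by the atomic base (represented by the conclusion
  assignment `base : ℕ → LFormula` for the constants `konst i`) and by the set `R` of
  characteristic rules (rewrite equations for the additional non-primitive symbols).
  With `R = ∅` this is exactly the system GG of d'Aragona.
* `Deriv base R Γ A` : derivability in the system; `Deriv base ∅ Γ A` is `Γ ⊢_GG A`.
-/

namespace Grounding

noncomputable section
open Classical

/-! ### The background language L -/

/-- Terms of the first-order background language. -/
inductive LTerm : Type
  | var : ℕ → LTerm
  | func : ℕ → List LTerm → LTerm

/-- `x` occurs (free) in the background term `t`. -/
inductive LTerm.FVar : ℕ → LTerm → Prop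
  | var (x : ℕ) : LTerm.FVar x (.var x)
  | func {x f : ℕ} {args : List LTerm} {t : LTerm} :
      t ∈ args → LTerm.FVar x t → LTerm.FVar x (.func f args)

/-- The set of variables of a background term. -/
def LTerm.fv (t : LTerm) : Set ℕ := {x | LTerm.FVar x t}

/-- Substitution `t[u/x]` in background terms. -/
def LTerm.subst : LTerm → ℕ → LTerm → LTerm
  | .var y, x, u => if y = x then u else .var y
  | .func f args, x, u => .func f (args.attach.map fun a => a.1.subst x u)
termination_by t _ _ => sizeOf t
decreasing_by
  have := List.sizeOf_lt_of_mem a.2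
  simp only [LTerm.func.sizeOf_spec]
  omega

/-- Formulas of the first-order background language, with absurdity constant `bot`. -/
inductive LFormula : Type
  | atom : ℕ → List LTerm → LFormula
  | bot : LFormula
  | and : LFormula → LFormula → LFormula
  | or : LFormula → LFormula → LFormula
  | imp : LFormula → LFormula → LFormula
  | all : ℕ → LFormula → LFormula
  | ex : ℕ → LFormula → LFormula

/-- Free variables of a background formula. -/
def LFormula.fv : LFormula → Set ℕ
  | .atom _ args => {x | ∃ t ∈ args, x ∈ t.fv}
  | .bot => ∅
  | .and a b => a.fv ∪ b.fv
  | .or a b => a.fv ∪ b.fv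
  | .imp a b => a.fv ∪ b.fv
  | .all y a => a.fv \ {y}
  | .ex y a => a.fv \ {y}

/-- Substitution `α[t/x]` in background formulas (no capture-renaming; use `freeFor`). -/
def LFormula.subst : LFormula → ℕ → LTerm → LFormula
  | .atom r args, x, t => .atom r (args.map fun u => u.subst x t)
  | .bot, _, _ => .bot
  | .and a b, x, t => .and (a.subst x t) (b.subst x t)
  | .or a b, x, t => .or (a.subst x t) (b.subst x t)
  | .imp a b, x, t => .imp (a.subst x t) (b.subst x t)
  | .all y a, x, t => if y = x then .all y a else .all y (a.subst x t)
  | .ex y a, x, t => if y = x then .ex y a else .ex y (a.subst x t)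

/-- `t` is free for `x` in `α`. -/
def LTerm.freeFor (t : LTerm) (x : ℕ) : LFormula → Prop
  | .atom _ _ => True
  | .bot => True
  | .and a b => t.freeFor x a ∧ t.freeFor x b
  | .or a b => t.freeFor x a ∧ t.freeFor x b
  | .imp a b => t.freeFor x a ∧ t.freeFor x b
  | .all y a => (x = y ∨ x ∉ a.fv) ∨ (y ∉ t.fv ∧ t.freeFor x a)
  | .ex y a => (x = y ∨ x ∉ a.fv) ∨ (y ∉ t.fv ∧ t.freeFor x a)

/-- The standard logical-complexity measure `k¹` of a background formula. -/
def LFormula.compl : LFormula → ℕ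
  | .atom _ _ => 0
  | .bot => 0
  | .and a b => max a.compl b.compl + 1
  | .or a b => max a.compl b.compl + 1
  | .imp a b => max a.compl b.compl + 1
  | .all _ a => a.compl + 1
  | .ex _ a => a.compl + 1

/-! ### Terms of the (enriched, possibly expanded) language of grounding -/

/-- Typed terms of the language of grounding. -/
inductive GTerm : Type
  | konst : ℕ → GTerm                                -- δ_i, naming closed atomic derivations
  | xi : LFormula → ℕ → GTerm                        -- typed ground-variables ξ^α_i
  | fh : LFormula → ℕ → ℕ → LTerm → GTerm            -- applied functional variables h^α_{x,i}(t)
  | ff : LFormula → ℕ → GTerm → GTerm                -- applied functional variables f^α_i(T)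
  | op : ℕ → GTerm                                   -- additional non-primitive operational symbols
  | app : GTerm → GTerm → GTerm                      -- application (for the additional symbols)
  | andI : GTerm → GTerm → GTerm                     -- ∧I(T,U)
  | orI : Bool → LFormula → GTerm → GTerm            -- ∨I[α_i ▷ α₁∨α₂]; `true` = left injection
  | impI : LFormula → ℕ → GTerm → GTerm              -- →I ξ^α_i (T), binding ξ^α_i
  | allI : ℕ → GTerm → GTerm                         -- ∀I x (T), binding x
  | exI : ℕ → LTerm → LFormula → GTerm → GTerm       -- ∃I[α(t/x) ▷ ∃x α](T)
  | andE : Bool → GTerm → GTerm                      -- ∧E,i(T), `true` = first projection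
  | orE : LFormula → LFormula → ℕ → ℕ → GTerm → GTerm → GTerm → GTerm
      -- ∨E ξ^α_i ξ^β_j (T,U,Z), binding ξ^α_i in U and ξ^β_j in Z
  | impE : GTerm → GTerm → GTerm                     -- →E(T,U)
  | allE : LTerm → GTerm → GTerm                     -- ∀E[∀xα ▷ α(t/x)](T)
  | exE : ℕ → LFormula → ℕ → GTerm → GTerm → GTerm   -- ∃E x ξ^{α}_j (T,U), binding x, ξ^α_j in U
  | botE : LFormula → GTerm → GTerm                  -- ⊥_α(T)

/-- Variables of the enriched language: individual, typed and functional. -/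
inductive GVar : Type
  | ind : ℕ → GVar
  | xi : LFormula → ℕ → GVar
  | fh : LFormula → ℕ → ℕ → GVar
  | ff : LFormula → ℕ → GVar

/-- Free variables (of all three kinds) of a grounding term. -/
def GTerm.fvar : GTerm → Set GVar
  | .konst _ => ∅
  | .xi γ j => {GVar.xi γ j} ∪ (GVar.ind '' γ.fv)
  | .fh γ y j t => {GVar.fh γ y j} ∪ (GVar.ind '' (t.fv ∪ (γ.fv \ {y})))
  | .ff γ j T => {GVar.ff γ j} ∪ (GVar.ind '' γ.fv) ∪ T.fvar
  | .op _ => ∅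
  | .app T U => T.fvar ∪ U.fvar
  | .andI T U => T.fvar ∪ U.fvar
  | .orI _ γ T => (GVar.ind '' γ.fv) ∪ T.fvar
  | .impI γ j T => (GVar.ind '' γ.fv) ∪ (T.fvar \ {GVar.xi γ j})
  | .allI y T => T.fvar \ {GVar.ind y}
  | .exI y t γ T => (GVar.ind '' (t.fv ∪ (γ.fv \ {y}))) ∪ T.fvar
  | .andE _ T => T.fvar
  | .orE γ δ i j T V W => T.fvar ∪ (V.fvar \ {GVar.xi γ i}) ∪ (W.fvar \ {GVar.xi δ j})
  | .impE T U => T.fvar ∪ U.fvar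
  | .allE t T => (GVar.ind '' t.fv) ∪ T.fvar
  | .exE y γ j T U => T.fvar ∪ ((U.fvar \ {GVar.xi γ j}) \ {GVar.ind y})
  | .botE γ T => (GVar.ind '' γ.fv) ∪ T.fvar

/-- `v` is a functional variable. -/
def GVar.isFun : GVar → Prop
  | .fh _ _ _ => True
  | .ff _ _ => True
  | _ => False

/-- The term contains no (free or applied) functional variables. -/
def GTerm.noFunVar (T : GTerm) : Prop := ∀ v ∈ T.fvar, ¬ v.isFun

/-- `T` is a term of the basic (non-enriched) language of grounding `Gen`
(no functional variables, no additional operational symbols). -/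
def GTerm.isGen : GTerm → Prop
  | .konst _ => True
  | .xi _ _ => True
  | .fh _ _ _ _ => False
  | .ff _ _ _ => False
  | .op _ => False
  | .app _ _ => False
  | .andI T U => T.isGen ∧ U.isGen
  | .orI _ _ T => T.isGen
  | .impI _ _ T => T.isGen
  | .allI _ T => T.isGen
  | .exI _ _ _ T => T.isGen
  | .andE _ T => T.isGen
  | .orE _ _ _ _ T U Z => T.isGen ∧ U.isGen ∧ Z.isGen
  | .impE T U => T.isGen ∧ U.isGen
  | .allE _ T => T.isGen
  | .exE _ _ _ T U => T.isGen ∧ U.isGen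
  | .botE _ T => T.isGen

/-- Substitution of the individual variable `x` by the background term `u` in a grounding term. -/
def GTerm.substInd (x : ℕ) (u : LTerm) : GTerm → GTerm
  | .konst i => .konst i
  | .xi γ j => .xi (γ.subst x u) j
  | .fh γ y j t => .fh (if y = x then γ else γ.subst x u) y j (t.subst x u)
  | .ff γ j T => .ff (γ.subst x u) j (T.substInd x u)
  | .op i => .op i
  | .app T U => .app (T.substInd x u) (U.substInd x u)
  | .andI T U => .andI (T.substInd x u) (U.substInd x u)
  | .orI b γ T => .orI b (γ.subst x u) (T.substInd x u)
  | .impI γ j T => .impI (γ.subst x u) j (T.substInd x u)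
  | .allI y T => if y = x then .allI y T else .allI y (T.substInd x u)
  | .exI y t γ T => .exI y (t.subst x u) (if y = x then γ else γ.subst x u) (T.substInd x u)
  | .andE b T => .andE b (T.substInd x u)
  | .orE γ δ i j T V W =>
      .orE (γ.subst x u) (δ.subst x u) i j (T.substInd x u) (V.substInd x u) (W.substInd x u)
  | .impE T U => .impE (T.substInd x u) (U.substInd x u)
  | .allE t T => .allE (t.subst x u) (T.substInd x u)
  | .exE y γ j T U =>
      .exE y (if y = x then γ else γ.subst x u) j (T.substInd x u)
        (if y = x then U else U.substInd x u)
  | .botE γ T => .botE (γ.subst x u) (T.substInd x u)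

/-- Substitution of the typed variable ξ^α_i by the term `W` in a grounding term. -/
def GTerm.substXi : GTerm → LFormula → ℕ → GTerm → GTerm
  | .konst k, _, _, _ => .konst k
  | .xi γ j, α, i, W => if γ = α ∧ j = i then W else .xi γ j
  | .fh γ y j t, _, _, _ => .fh γ y j t
  | .ff γ j T, α, i, W => .ff γ j (T.substXi α i W)
  | .op k, _, _, _ => .op k
  | .app T U, α, i, W => .app (T.substXi α i W) (U.substXi α i W)
  | .andI T U, α, i, W => .andI (T.substXi α i W) (U.substXi α i W)
  | .orI b γ T, α, i, W => .orI b γ (T.substXi α i W)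
  | .impI γ j T, α, i, W => if γ = α ∧ j = i then .impI γ j T else .impI γ j (T.substXi α i W)
  | .allI y T, α, i, W => .allI y (T.substXi α i W)
  | .exI y t γ T, α, i, W => .exI y t γ (T.substXi α i W)
  | .andE b T, α, i, W => .andE b (T.substXi α i W)
  | .orE γ δ k l T V Z, α, i, W =>
      .orE γ δ k l (T.substXi α i W)
        (if γ = α ∧ k = i then V else V.substXi α i W)
        (if δ = α ∧ l = i then Z else Z.substXi α i W)
  | .impE T U, α, i, W => .impE (T.substXi α i W) (U.substXi α i W)
  | .allE t T, α, i, W => .allE t (T.substXi α i W)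
  | .exE y γ j T U, α, i, W =>
      .exE y γ j (T.substXi α i W) (if γ = α ∧ j = i then U else U.substXi α i W)
  | .botE γ T, α, i, W => .botE γ (T.substXi α i W)

/-- Substitution of the functional variable h^β_{x,m} by the term `U`
(occurrences `h^β_{x,m}(t)` become `U[t/x]`). -/
def GTerm.substFH : GTerm → LFormula → ℕ → ℕ → GTerm → GTerm
  | .konst i, _, _, _, _ => .konst i
  | .xi γ j, _, _, _, _ => .xi γ j
  | .fh γ y j t, β, x, m, U => if γ = β ∧ y = x ∧ j = m then U.substInd x t else .fh γ y j t
  | .ff γ j T, β, x, m, U => .ff γ j (T.substFH β x m U)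
  | .op i, _, _, _, _ => .op i
  | .app T V, β, x, m, U => .app (T.substFH β x m U) (V.substFH β x m U)
  | .andI T V, β, x, m, U => .andI (T.substFH β x m U) (V.substFH β x m U)
  | .orI b γ T, β, x, m, U => .orI b γ (T.substFH β x m U)
  | .impI γ j T, β, x, m, U => .impI γ j (T.substFH β x m U)
  | .allI y T, β, x, m, U => .allI y (T.substFH β x m U)
  | .exI y t γ T, β, x, m, U => .exI y t γ (T.substFH β x m U)
  | .andE b T, β, x, m, U => .andE b (T.substFH β x m U)
  | .orE γ δ k l T V Z, β, x, m, U =>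
      .orE γ δ k l (T.substFH β x m U) (V.substFH β x m U) (Z.substFH β x m U)
  | .impE T V, β, x, m, U => .impE (T.substFH β x m U) (V.substFH β x m U)
  | .allE t T, β, x, m, U => .allE t (T.substFH β x m U)
  | .exE y γ j T V, β, x, m, U => .exE y γ j (T.substFH β x m U) (V.substFH β x m U)
  | .botE γ T, β, x, m, U => .botE γ (T.substFH β x m U)

/-- Substitution of the functional variable f^β_m by the term `U`
(whole applications `f^β_m(Z)` become `U`). -/
def GTerm.substFF : GTerm → LFormula → ℕ → GTerm → GTerm
  | .konst i, _, _, _ => .konst i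
  | .xi γ j, _, _, _ => .xi γ j
  | .fh γ y j t, _, _, _ => .fh γ y j t
  | .ff γ j T, β, m, U => if γ = β ∧ j = m then U else .ff γ j (T.substFF β m U)
  | .op i, _, _, _ => .op i
  | .app T V, β, m, U => .app (T.substFF β m U) (V.substFF β m U)
  | .andI T V, β, m, U => .andI (T.substFF β m U) (V.substFF β m U)
  | .orI b γ T, β, m, U => .orI b γ (T.substFF β m U)
  | .impI γ j T, β, m, U => .impI γ j (T.substFF β m U)
  | .allI y T, β, m, U => .allI y (T.substFF β m U)
  | .exI y t γ T, β, m, U => .exI y t γ (T.substFF β m U)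
  | .andE b T, β, m, U => .andE b (T.substFF β m U)
  | .orE γ δ k l T V Z, β, m, U =>
      .orE γ δ k l (T.substFF β m U) (V.substFF β m U) (Z.substFF β m U)
  | .impE T V, β, m, U => .impE (T.substFF β m U) (V.substFF β m U)
  | .allE t T, β, m, U => .allE t (T.substFF β m U)
  | .exE y γ j T V, β, m, U => .exE y γ j (T.substFF β m U) (V.substFF β m U)
  | .botE γ T, β, m, U => .botE γ (T.substFF β m U)

/-! ### Formulas of the enriched language of grounding -/

/-- Formulas of the enriched language of grounding: `gr T α` is the atomic formula
`Gr(T, α)` (written `T : α`), `equiv T U` is `T ≡ U`, `botG` is ⊥^G, and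
`conj, disj, impl, pi, exi` are ×, +, ⊃, Π, 𝔈. -/
inductive GForm : Type
  | gr : GTerm → LFormula → GForm
  | equiv : GTerm → GTerm → GForm
  | botG : GForm
  | conj : GForm → GForm → GForm
  | disj : GForm → GForm → GForm
  | impl : GForm → GForm → GForm
  | pi : GVar → GForm → GForm
  | exi : GVar → GForm → GForm

/-- Bi-implication `A ⇔ B`, an abbreviation for `(A ⊃ B) × (B ⊃ A)`. -/
def gIff (A B : GForm) : GForm := .conj (.impl A B) (.impl B A)

/-- Negation `¬^G A`, an abbreviation for `A ⊃ ⊥^G`. -/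
def gNeg (A : GForm) : GForm := .impl A .botG

/-- Free variables of a formula of the enriched language. -/
def GForm.fvar : GForm → Set GVar
  | .gr T α => T.fvar ∪ (GVar.ind '' α.fv)
  | .equiv T U => T.fvar ∪ U.fvar
  | .botG => ∅
  | .conj A B => A.fvar ∪ B.fvar
  | .disj A B => A.fvar ∪ B.fvar
  | .impl A B => A.fvar ∪ B.fvar
  | .pi v A => A.fvar \ {v}
  | .exi v A => A.fvar \ {v}

/-- Substitution of `x` by `u` in the type annotations of a variable. -/
def GVar.substInd (x : ℕ) (u : LTerm) : GVar → GVar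
  | .ind y => .ind y
  | .xi γ j => .xi (γ.subst x u) j
  | .fh γ y j => .fh (if y = x then γ else γ.subst x u) y j
  | .ff γ j => .ff (γ.subst x u) j

/-- Substitution of the individual variable `x` by `u` in a formula. -/
def GForm.substInd (x : ℕ) (u : LTerm) : GForm → GForm
  | .gr T α => .gr (T.substInd x u) (α.subst x u)
  | .equiv T U => .equiv (T.substInd x u) (U.substInd x u)
  | .botG => .botG
  | .conj A B => .conj (A.substInd x u) (B.substInd x u)
  | .disj A B => .disj (A.substInd x u) (B.substInd x u)
  | .impl A B => .impl (A.substInd x u) (B.substInd x u)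
  | .pi v A => if v = .ind x then .pi v A else .pi (v.substInd x u) (A.substInd x u)
  | .exi v A => if v = .ind x then .exi v A else .exi (v.substInd x u) (A.substInd x u)

/-- Substitution of the typed variable ξ^α_i by the term `W` in a formula. -/
def GForm.substXi (α : LFormula) (i : ℕ) (W : GTerm) : GForm → GForm
  | .gr T γ => .gr (T.substXi α i W) γ
  | .equiv T U => .equiv (T.substXi α i W) (U.substXi α i W)
  | .botG => .botG
  | .conj A B => .conj (A.substXi α i W) (B.substXi α i W)
  | .disj A B => .disj (A.substXi α i W) (B.substXi α i W)
  | .impl A B => .impl (A.substXi α i W) (B.substXi α i W)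
  | .pi v A => if v = .xi α i then .pi v A else .pi v (A.substXi α i W)
  | .exi v A => if v = .xi α i then .exi v A else .exi v (A.substXi α i W)

/-- Substitution of the functional variable h^β_{x,m} by the term `U` in a formula. -/
def GForm.substFH (β : LFormula) (x m : ℕ) (U : GTerm) : GForm → GForm
  | .gr T γ => .gr (T.substFH β x m U) γ
  | .equiv T V => .equiv (T.substFH β x m U) (V.substFH β x m U)
  | .botG => .botG
  | .conj A B => .conj (A.substFH β x m U) (B.substFH β x m U)
  | .disj A B => .disj (A.substFH β x m U) (B.substFH β x m U)
  | .impl A B => .impl (A.substFH β x m U) (B.substFH β x m U)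
  | .pi v A => if v = .fh β x m then .pi v A else .pi v (A.substFH β x m U)
  | .exi v A => if v = .fh β x m then .exi v A else .exi v (A.substFH β x m U)

/-- Substitution of the functional variable f^β_m by the term `U` in a formula. -/
def GForm.substFF (β : LFormula) (m : ℕ) (U : GTerm) : GForm → GForm
  | .gr T γ => .gr (T.substFF β m U) γ
  | .equiv T V => .equiv (T.substFF β m U) (V.substFF β m U)
  | .botG => .botG
  | .conj A B => .conj (A.substFF β m U) (B.substFF β m U)
  | .disj A B => .disj (A.substFF β m U) (B.substFF β m U)
  | .impl A B => .impl (A.substFF β m U) (B.substFF β m U)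
  | .pi v A => if v = .ff β m then .pi v A else .pi v (A.substFF β m U)
  | .exi v A => if v = .ff β m then .exi v A else .exi v (A.substFF β m U)

/-! ### Typing of grounding terms -/

/-- `HasType base T α` : the grounding term `T` is of type `α` (relative to the atomic base,
represented by the assignment `base` of conclusions to the constants naming closed atomic
derivations). -/
inductive HasType (base : ℕ → LFormula) : GTerm → LFormula → Prop
  | konst (i : ℕ) : HasType base (.konst i) (base i)
  | xi (γ : LFormula) (j : ℕ) : HasType base (.xi γ j) γ
  | fh (γ : LFormula) (y j : ℕ) (t : LTerm) : HasType base (.fh γ y j t) (γ.subst y t)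
  | ff {T : GTerm} {δ : LFormula} (γ : LFormula) (j : ℕ) :
      HasType base T δ → HasType base (.ff γ j T) γ
  | andI {T U α β} : HasType base T α → HasType base U β → HasType base (.andI T U) (α.and β)
  | orIL {T α} (β) : HasType base T α → HasType base (.orI true β T) (α.or β)
  | orIR {T β} (α) : HasType base T β → HasType base (.orI false α T) (α.or β)
  | impI {T β} (α : LFormula) (j : ℕ) : HasType base T β → HasType base (.impI α j T) (α.imp β)
  | allI {T α} (x : ℕ) : HasType base T α →
      (∀ γ j, GVar.xi γ j ∈ T.fvar → x ∉ γ.fv) → HasType base (.allI x T) (.all x α)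
  | exI {T} (x : ℕ) (t : LTerm) (α : LFormula) :
      HasType base T (α.subst x t) → t.freeFor x α → HasType base (.exI x t α T) (.ex x α)
  | andEL {T α β} : HasType base T (.and α β) → HasType base (.andE true T) α
  | andER {T α β} : HasType base T (.and α β) → HasType base (.andE false T) β
  | orE {T U Z α β γ} (i j : ℕ) : HasType base T (.or α β) → HasType base U γ →
      HasType base Z γ → HasType base (.orE α β i j T U Z) γ
  | impE {T U α β} : HasType base T (.imp α β) → HasType base U α → HasType base (.impE T U) β
  | allE {T α} (x : ℕ) (t : LTerm) : HasType base T (.all x α) → t.freeFor x α →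
      HasType base (.allE t T) (α.subst x t)
  | exE {T U α β} (x j : ℕ) : HasType base T (.ex x α) → HasType base U β →
      (∀ γ k, GVar.xi γ k ∈ U.fvar → γ ≠ α → x ∉ γ.fv) → HasType base (.exE x α j T U) β
  | botE {T} (α : LFormula) : HasType base T .bot → HasType base (.botE α T) α

/-! ### Derivations -/

/-- Names of the rules of a system of grounding. -/
inductive RuleTag : Type
  | assum | constAx
  | andIntro | orIntroL | orIntroR | impIntro | allIntro | exIntro
  | dAnd | dOr | dImp | dAll | dEx | botT
  | eqRefl | eqSymm | eqTrans | eqPres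
  | congAndI | congAndIInv1 | congAndIInv2 | congAndE
  | congOrI | congOrIInv | congOrE
  | congImpI | congImpIInv | congImpE
  | congAllI | congAllIInv | congAllE
  | congExI | congExIInv | congExE
  | congBotE | congApp
  | rAnd | rOr | rImp | rAll | rEx
  | charR
  | timesI | timesE1 | timesE2 | plusI1 | plusI2 | plusE
  | supI | supE | piI | piE | frakEI | frakEE | botGE
deriving DecidableEq

/-- Derivation trees: each node carries its conclusion, the rule applied,
and the list of the subderivations of the premises (major premise first). -/
inductive PTree : Type
  | node : GForm → RuleTag → List PTree → PTree

/-- Conclusion of a derivation tree. -/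
def PTree.concl : PTree → GForm
  | .node A _ _ => A

/-- The rule applied at the root. -/
def PTree.tag : PTree → RuleTag
  | .node _ r _ => r

/-- `Valid base R Γ t` : the tree `t` is a correct derivation from open assumptions in `Γ`
in the system of grounding over the atomic base represented by `base`, with set `R` of
characteristic rules (premises/conclusion pairs, used for the rewrite equations of
additional non-primitive operational symbols).  With `R = ∅` this is the system `GG`. -/
inductive Valid (base : ℕ → LFormula) (R : Set (List GForm × GForm)) : Set GForm → PTree → Prop
  -- assumption rule
  | assum {Γ A} : A ∈ Γ → Valid base R Γ (.node A .assum [])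
  -- axioms δ : α for the constants naming closed atomic derivations with conclusion α
  | constAx {Γ} (i : ℕ) : Valid base R Γ (.node (.gr (.konst i) (base i)) .constAx [])
  -- type introductions
  | andIntro {Γ t u T U α β} : Valid base R Γ t → Valid base R Γ u →
      t.concl = .gr T α → u.concl = .gr U β →
      Valid base R Γ (.node (.gr (.andI T U) (.and α β)) .andIntro [t, u])
  | orIntroL {Γ t T α β} : Valid base R Γ t → t.concl = .gr T α →
      Valid base R Γ (.node (.gr (.orI true β T) (.or α β)) .orIntroL [t])
  | orIntroR {Γ t T α β} : Valid base R Γ t → t.concl = .gr T β →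
      Valid base R Γ (.node (.gr (.orI false α T) (.or α β)) .orIntroR [t])
  | impIntro {Γ t T α β i} :
      Valid base R (insert (.gr (.xi α i) α) Γ) t → t.concl = .gr T β →
      (∀ B ∈ Γ, GVar.xi α i ∉ B.fvar) →
      Valid base R Γ (.node (.gr (.impI α i T) (.imp α β)) .impIntro [t])
  | allIntro {Γ t T α x} : Valid base R Γ t → t.concl = .gr T α →
      (∀ B ∈ Γ, GVar.ind x ∉ B.fvar) →
      Valid base R Γ (.node (.gr (.allI x T) (.all x α)) .allIntro [t])
  | exIntro {Γ t T α x u} : Valid base R Γ t → t.concl = .gr T (α.subst x u) →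
      u.freeFor x α →
      Valid base R Γ (.node (.gr (.exI x u α T) (.ex x α)) .exIntro [t])
  -- generalized type eliminations
  | dAnd {Γ t s T α β i j A} :
      Valid base R Γ t → t.concl = .gr T (.and α β) →
      Valid base R (insert (.equiv T (.andI (.xi α i) (.xi β j)))
          (insert (.gr (.xi α i) α) (insert (.gr (.xi β j) β) Γ))) s →
      s.concl = A →
      (∀ B ∈ Γ, GVar.xi α i ∉ B.fvar ∧ GVar.xi β j ∉ B.fvar) →
      GVar.xi α i ∉ A.fvar → GVar.xi β j ∉ A.fvar →
      GVar.xi α i ∉ T.fvar → GVar.xi β j ∉ T.fvar →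
      Valid base R Γ (.node A .dAnd [t, s])
  | dOr {Γ t s₁ s₂ T α β i j A} :
      Valid base R Γ t → t.concl = .gr T (.or α β) →
      Valid base R (insert (.equiv T (.orI true β (.xi α i))) (insert (.gr (.xi α i) α) Γ)) s₁ →
      Valid base R (insert (.equiv T (.orI false α (.xi β j))) (insert (.gr (.xi β j) β) Γ)) s₂ →
      s₁.concl = A → s₂.concl = A →
      (∀ B ∈ Γ, GVar.xi α i ∉ B.fvar ∧ GVar.xi β j ∉ B.fvar) →
      GVar.xi α i ∉ A.fvar → GVar.xi β j ∉ A.fvar →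
      GVar.xi α i ∉ T.fvar → GVar.xi β j ∉ T.fvar →
      Valid base R Γ (.node A .dOr [t, s₁, s₂])
  | dImp {Γ t s T α β k m A} :
      Valid base R Γ t → t.concl = .gr T (.imp α β) →
      Valid base R (insert (.equiv T (.impI α k (.ff β m (.xi α k))))
          (insert (.pi (.xi α k) (.impl (.gr (.xi α k) α) (.gr (.ff β m (.xi α k)) β))) Γ)) s →
      s.concl = A →
      (∀ B ∈ Γ, GVar.ff β m ∉ B.fvar) → GVar.ff β m ∉ A.fvar → GVar.ff β m ∉ T.fvar →
      Valid base R Γ (.node A .dImp [t, s])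
  | dAll {Γ t s T α x m A} :
      Valid base R Γ t → t.concl = .gr T (.all x α) →
      Valid base R (insert (.equiv T (.allI x (.fh α x m (.var x))))
          (insert (.pi (.ind x) (.gr (.fh α x m (.var x)) α)) Γ)) s →
      s.concl = A →
      (∀ B ∈ Γ, GVar.fh α x m ∉ B.fvar) → GVar.fh α x m ∉ A.fvar → GVar.fh α x m ∉ T.fvar →
      Valid base R Γ (.node A .dAll [t, s])
  | dEx {Γ t s T α x j A} :
      Valid base R Γ t → t.concl = .gr T (.ex x α) →
      Valid base R (insert (.equiv T (.exI x (.var x) α (.xi α j)))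
          (insert (.gr (.xi α j) α) Γ)) s →
      s.concl = A →
      (∀ B ∈ Γ, GVar.ind x ∉ B.fvar ∧ GVar.xi α j ∉ B.fvar) →
      GVar.ind x ∉ A.fvar → GVar.xi α j ∉ A.fvar → GVar.xi α j ∉ T.fvar →
      Valid base R Γ (.node A .dEx [t, s])
  -- the rule for the type ⊥
  | botT {Γ t T} : Valid base R Γ t → t.concl = .gr T .bot →
      Valid base R Γ (.node .botG .botT [t])
  -- equivalence rules: reflexivity, symmetry, transitivity, preservation of denotation
  | eqRefl {Γ} (T : GTerm) : Valid base R Γ (.node (.equiv T T) .eqRefl [])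
  | eqSymm {Γ t T U} : Valid base R Γ t → t.concl = .equiv T U →
      Valid base R Γ (.node (.equiv U T) .eqSymm [t])
  | eqTrans {Γ t s T U W} : Valid base R Γ t → Valid base R Γ s →
      t.concl = .equiv T U → s.concl = .equiv U W →
      Valid base R Γ (.node (.equiv T W) .eqTrans [t, s])
  | eqPres {Γ t s T U α} : Valid base R Γ t → Valid base R Γ s →
      t.concl = .equiv T U → s.concl = .gr U α →
      Valid base R Γ (.node (.gr T α) .eqPres [t, s])
  -- congruence: operational symbols applied to equivalent terms yield equivalent terms
  | congAndI {Γ t s T U V W} : Valid base R Γ t → Valid base R Γ s →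
      t.concl = .equiv T U → s.concl = .equiv V W →
      Valid base R Γ (.node (.equiv (.andI T V) (.andI U W)) .congAndI [t, s])
  | congAndIInv1 {Γ t T₁ T₂ U₁ U₂} : Valid base R Γ t →
      t.concl = .equiv (.andI T₁ T₂) (.andI U₁ U₂) →
      Valid base R Γ (.node (.equiv T₁ U₁) .congAndIInv1 [t])
  | congAndIInv2 {Γ t T₁ T₂ U₁ U₂} : Valid base R Γ t →
      t.concl = .equiv (.andI T₁ T₂) (.andI U₁ U₂) →
      Valid base R Γ (.node (.equiv T₂ U₂) .congAndIInv2 [t])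
  | congAndE {Γ t T U} (b : Bool) : Valid base R Γ t → t.concl = .equiv T U →
      Valid base R Γ (.node (.equiv (.andE b T) (.andE b U)) .congAndE [t])
  | congOrI {Γ t T U} (b : Bool) (γ : LFormula) : Valid base R Γ t → t.concl = .equiv T U →
      Valid base R Γ (.node (.equiv (.orI b γ T) (.orI b γ U)) .congOrI [t])
  | congOrIInv {Γ t T U b γ} : Valid base R Γ t →
      t.concl = .equiv (.orI b γ T) (.orI b γ U) →
      Valid base R Γ (.node (.equiv T U) .congOrIInv [t])
  | congOrE {Γ t s₁ s₂ T U V₁ V₂ W₁ W₂} (α β : LFormula) (i j : ℕ) :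
      Valid base R Γ t → Valid base R Γ s₁ → Valid base R Γ s₂ →
      t.concl = .equiv T U → s₁.concl = .equiv V₁ V₂ → s₂.concl = .equiv W₁ W₂ →
      Valid base R Γ
        (.node (.equiv (.orE α β i j T V₁ W₁) (.orE α β i j U V₂ W₂)) .congOrE [t, s₁, s₂])
  | congImpI {Γ t T U} (α : LFormula) (i : ℕ) : Valid base R Γ t → t.concl = .equiv T U →
      Valid base R Γ (.node (.equiv (.impI α i T) (.impI α i U)) .congImpI [t])
  | congImpIInv {Γ t T U α i} : Valid base R Γ t →
      t.concl = .equiv (.impI α i T) (.impI α i U) →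
      Valid base R Γ (.node (.equiv T U) .congImpIInv [t])
  | congImpE {Γ t s T₁ T₂ U₁ U₂} : Valid base R Γ t → Valid base R Γ s →
      t.concl = .equiv T₁ T₂ → s.concl = .equiv U₁ U₂ →
      Valid base R Γ (.node (.equiv (.impE T₁ U₁) (.impE T₂ U₂)) .congImpE [t, s])
  | congAllI {Γ t T U} (x : ℕ) : Valid base R Γ t → t.concl = .equiv T U →
      Valid base R Γ (.node (.equiv (.allI x T) (.allI x U)) .congAllI [t])
  | congAllIInv {Γ t T U x} : Valid base R Γ t →
      t.concl = .equiv (.allI x T) (.allI x U) →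
      Valid base R Γ (.node (.equiv T U) .congAllIInv [t])
  | congAllE {Γ t T U} (u : LTerm) : Valid base R Γ t → t.concl = .equiv T U →
      Valid base R Γ (.node (.equiv (.allE u T) (.allE u U)) .congAllE [t])
  | congExI {Γ t T U} (x : ℕ) (u : LTerm) (α : LFormula) :
      Valid base R Γ t → t.concl = .equiv T U →
      Valid base R Γ (.node (.equiv (.exI x u α T) (.exI x u α U)) .congExI [t])
  | congExIInv {Γ t T U x u α} : Valid base R Γ t →
      t.concl = .equiv (.exI x u α T) (.exI x u α U) →
      Valid base R Γ (.node (.equiv T U) .congExIInv [t])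
  | congExE {Γ t s T U V W} (x : ℕ) (α : LFormula) (j : ℕ) :
      Valid base R Γ t → Valid base R Γ s →
      t.concl = .equiv T U → s.concl = .equiv V W →
      Valid base R Γ (.node (.equiv (.exE x α j T V) (.exE x α j U W)) .congExE [t, s])
  | congBotE {Γ t T U} (α : LFormula) : Valid base R Γ t → t.concl = .equiv T U →
      Valid base R Γ (.node (.equiv (.botE α T) (.botE α U)) .congBotE [t])
  | congApp {Γ t s T U V W} : Valid base R Γ t → Valid base R Γ s →
      t.concl = .equiv T U → s.concl = .equiv V W →
      Valid base R Γ (.node (.equiv (.app T V) (.app U W)) .congApp [t, s])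
  -- rewrite equations for computing the non-canonical terms
  | rAnd {Γ} (b : Bool) (T U : GTerm) :
      Valid base R Γ (.node (.equiv (.andE b (.andI T U)) (cond b T U)) .rAnd [])
  | rOrL {Γ} (α β : LFormula) (i j : ℕ) (T U Z : GTerm) :
      Valid base R Γ
        (.node (.equiv (.orE α β i j (.orI true β T) U Z) (U.substXi α i T)) .rOr [])
  | rOrR {Γ} (α β : LFormula) (i j : ℕ) (T U Z : GTerm) :
      Valid base R Γ
        (.node (.equiv (.orE α β i j (.orI false α T) U Z) (Z.substXi β j T)) .rOr [])
  | rImp {Γ} (α : LFormula) (k : ℕ) (T U : GTerm) :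
      Valid base R Γ (.node (.equiv (.impE (.impI α k T) U) (T.substXi α k U)) .rImp [])
  | rAll {Γ} (x : ℕ) (u : LTerm) (T : GTerm) :
      Valid base R Γ (.node (.equiv (.allE u (.allI x T)) (T.substInd x u)) .rAll [])
  | rEx {Γ} (x : ℕ) (u : LTerm) (α : LFormula) (j : ℕ) (T U : GTerm) :
      Valid base R Γ
        (.node (.equiv (.exE x α j (.exI x u α T) U)
          ((U.substInd x u).substXi (α.subst x u) j T)) .rEx [])
  -- characteristic rules of the system (for expansions of GG)
  | charRule {Γ prems concl} {ts : List PTree} :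
      (prems, concl) ∈ R → ts.length = prems.length →
      (∀ (k : ℕ) (t : PTree) (P : GForm), ts[k]? = some t → prems[k]? = some P →
        Valid base R Γ t) →
      (∀ (k : ℕ) (t : PTree) (P : GForm), ts[k]? = some t → prems[k]? = some P →
        t.concl = P) →
      Valid base R Γ (.node concl .charR ts)
  -- intuitionistic logic: ×, +, ⊃, Π, 𝔈, ⊥^G
  | timesI {Γ t s A B} : Valid base R Γ t → Valid base R Γ s → t.concl = A → s.concl = B →
      Valid base R Γ (.node (.conj A B) .timesI [t, s])
  | timesE1 {Γ t A B} : Valid base R Γ t → t.concl = .conj A B →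
      Valid base R Γ (.node A .timesE1 [t])
  | timesE2 {Γ t A B} : Valid base R Γ t → t.concl = .conj A B →
      Valid base R Γ (.node B .timesE2 [t])
  | plusI1 {Γ t A} (B : GForm) : Valid base R Γ t → t.concl = A →
      Valid base R Γ (.node (.disj A B) .plusI1 [t])
  | plusI2 {Γ t B} (A : GForm) : Valid base R Γ t → t.concl = B →
      Valid base R Γ (.node (.disj A B) .plusI2 [t])
  | plusE {Γ t s₁ s₂ A B C} : Valid base R Γ t → t.concl = .disj A B →
      Valid base R (insert A Γ) s₁ → s₁.concl = C →
      Valid base R (insert B Γ) s₂ → s₂.concl = C →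
      Valid base R Γ (.node C .plusE [t, s₁, s₂])
  | supI {Γ t A B} : Valid base R (insert A Γ) t → t.concl = B →
      Valid base R Γ (.node (.impl A B) .supI [t])
  | supE {Γ t s A B} : Valid base R Γ t → Valid base R Γ s →
      t.concl = .impl A B → s.concl = A →
      Valid base R Γ (.node B .supE [t, s])
  | piI {Γ t A} (v : GVar) : Valid base R Γ t → t.concl = A →
      (∀ C ∈ Γ, v ∉ C.fvar) →
      Valid base R Γ (.node (.pi v A) .piI [t])
  | piEInd {Γ t A x u} : Valid base R Γ t → t.concl = .pi (.ind x) A →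
      Valid base R Γ (.node (A.substInd x u) .piE [t])
  | piEXi {Γ t A α i τ} : Valid base R Γ t → t.concl = .pi (.xi α i) A →
      HasType base τ α → τ.noFunVar →
      Valid base R Γ (.node (A.substXi α i τ) .piE [t])
  | piEFh {Γ t A β x m τ} : Valid base R Γ t → t.concl = .pi (.fh β x m) A →
      HasType base τ β → τ.noFunVar → (∀ γ j, GVar.xi γ j ∈ τ.fvar → x ∉ γ.fv) →
      Valid base R Γ (.node (A.substFH β x m τ) .piE [t])
  | piEFf {Γ t A β m τ} : Valid base R Γ t → t.concl = .pi (.ff β m) A →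
      HasType base τ β → τ.noFunVar →
      Valid base R Γ (.node (A.substFF β m τ) .piE [t])
  | frakEIInd {Γ t A x u} : Valid base R Γ t → t.concl = A.substInd x u →
      Valid base R Γ (.node (.exi (.ind x) A) .frakEI [t])
  | frakEIXi {Γ t A α i τ} : Valid base R Γ t → t.concl = A.substXi α i τ →
      HasType base τ α → τ.noFunVar →
      Valid base R Γ (.node (.exi (.xi α i) A) .frakEI [t])
  | frakEIFh {Γ t A β x m τ} : Valid base R Γ t → t.concl = A.substFH β x m τ →
      HasType base τ β → τ.noFunVar → (∀ γ j, GVar.xi γ j ∈ τ.fvar → x ∉ γ.fv) →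
      Valid base R Γ (.node (.exi (.fh β x m) A) .frakEI [t])
  | frakEIFf {Γ t A β m τ} : Valid base R Γ t → t.concl = A.substFF β m τ →
      HasType base τ β → τ.noFunVar →
      Valid base R Γ (.node (.exi (.ff β m) A) .frakEI [t])
  | frakEE {Γ t s A B} (v : GVar) : Valid base R Γ t → t.concl = .exi v A →
      Valid base R (insert A Γ) s → s.concl = B →
      (∀ C ∈ Γ, v ∉ C.fvar) → v ∉ B.fvar →
      Valid base R Γ (.node B .frakEE [t, s])
  | botGE {Γ t} (A : GForm) : Valid base R Γ t → t.concl = .botG →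
      Valid base R Γ (.node A .botGE [t])

/-- `Deriv base R Γ A` : the formula `A` is derivable from assumptions `Γ` in the system
of grounding determined by `base` and `R`.  `Deriv base ∅ Γ A` is derivability in `GG`,
i.e. `Γ ⊢_GG A`. -/
def Deriv (base : ℕ → LFormula) (R : Set (List GForm × GForm)) (Γ : Set GForm)
    (A : GForm) : Prop :=
  ∃ t : PTree, Valid base R Γ t ∧ t.concl = A

/-! ### Part B: occurrences, cut-segments, measures, reductions and normal form -/

/-- Positions (occurrences) in a derivation tree: a path from the root (the conclusion,
standing lowest) to a node; longer positions stand higher in the derivation. -/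
abbrev Pos := List ℕ

/-- The subtree of `t` at position `p` (if any). -/
def PTree.sub : PTree → Pos → Option PTree
  | t, [] => some t
  | .node _ _ l, k :: p => (l[k]?).bind fun c => PTree.sub c p
termination_by t p => p.length

/-- The formula occurring at position `p`. -/
def formulaAt (Δ : PTree) (p : Pos) : Option GForm := (Δ.sub p).map PTree.concl

/-- The rule applied at position `p`. -/
def tagAt (Δ : PTree) (p : Pos) : Option RuleTag := (Δ.sub p).map PTree.tag

/-- The occurrence `p` stands above the occurrence `q` (`q` is a proper prefix of `p`;
conclusions stand at the bottom). -/
def StandsAbove (p q : Pos) : Prop := q ≠ p ∧ q <+: p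

/-- Two occurrences are side-connected iff they are premises of one and the same
inference. -/
def SideConnected (Δ : PTree) (p q : Pos) : Prop :=
  (formulaAt Δ p).isSome ∧ (formulaAt Δ q).isSome ∧
  ∃ r k m, k ≠ m ∧ p = r ++ [k] ∧ q = r ++ [m]

/-- `r` is a type introduction rule. -/
def RuleTag.isTypeIntro (r : RuleTag) : Prop :=
  r = .andIntro ∨ r = .orIntroL ∨ r = .orIntroR ∨ r = .impIntro ∨ r = .allIntro ∨ r = .exIntro

/-- `r` is an introduction rule for a logical constant of the enriched language. -/
def RuleTag.isLogicIntro (r : RuleTag) : Prop :=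
  r = .timesI ∨ r = .plusI1 ∨ r = .plusI2 ∨ r = .supI ∨ r = .piI ∨ r = .frakEI

/-- `r` is a generalized type elimination rule. -/
def RuleTag.isTypeElim (r : RuleTag) : Prop :=
  r = .dAnd ∨ r = .dOr ∨ r = .dImp ∨ r = .dAll ∨ r = .dEx

/-- `r` is one of (+_E), (𝔈_E) or a type elimination (the rules through which segments
may pass). -/
def RuleTag.isPermElim (r : RuleTag) : Prop :=
  r = .plusE ∨ r = .frakEE ∨ r.isTypeElim

/-- `r` is an elimination rule (with its major premise as first premise). -/
def RuleTag.isMajorElim (r : RuleTag) : Prop :=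
  r = .timesE1 ∨ r = .timesE2 ∨ r = .plusE ∨ r = .supE ∨ r = .piE ∨ r = .frakEE ∨
    r.isTypeElim

/-- The elimination rule `re` corresponds to the introduction rule `ri`
(D_s for sI, (κ_E) for (κ_I)). -/
def RuleTag.matchIE : RuleTag → RuleTag → Prop
  | .andIntro, .dAnd => True
  | .orIntroL, .dOr => True
  | .orIntroR, .dOr => True
  | .impIntro, .dImp => True
  | .allIntro, .dAll => True
  | .exIntro, .dEx => True
  | .timesI, .timesE1 => True
  | .timesI, .timesE2 => True
  | .plusI1, .plusE => True
  | .plusI2, .plusE => True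
  | .supI, .supE => True
  | .piI, .piE => True
  | .frakEI, .frakEE => True
  | _, _ => False

/-- `IsCutSeg Δ σ A` : `σ` (listed from the upper edge down to the lower edge) is a
cut-segment of `Δ` with formula `A`: a sequence of occurrences of `A` whose first member is
the conclusion of a type introduction or of a logical introduction, each following member is
the conclusion of (+_E), (𝔈_E) or a type elimination of which the preceding member is a
minor premise, and whose last member is the major premise of the elimination corresponding
to the initial introduction. -/
def IsCutSeg (Δ : PTree) (σ : List Pos) (A : GForm) : Prop :=
  σ ≠ [] ∧
  (∀ p ∈ σ, formulaAt Δ p = some A) ∧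
  (∃ p ri, σ.head? = some p ∧ tagAt Δ p = some ri ∧ (ri.isTypeIntro ∨ ri.isLogicIntro) ∧
    ∃ q pr re, σ.getLast? = some q ∧ q = pr ++ [0] ∧ tagAt Δ pr = some re ∧
      ri.matchIE re) ∧
  List.Chain' (fun p q => (∃ k, k ≠ 0 ∧ q ++ [k] = p) ∧
    ∃ r', tagAt Δ q = some r' ∧ r'.isPermElim) σ

/-- Lexicographic ("alphabetic") strict order on measures. -/
def mlt (a b : ℕ × ℕ) : Prop := a.1 < b.1 ∨ (a.1 = b.1 ∧ a.2 < b.2)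

/-- Lexicographic order on measures (reflexive). -/
def mle (a b : ℕ × ℕ) : Prop := a = b ∨ mlt a b

/-- The type-measure τ(A): the maximum of k¹(α) over the subformulas `U : α` of `A`
(0 if there are none). -/
def GForm.tmeas : GForm → ℕ
  | .gr _ α => α.compl
  | .equiv _ _ => 0
  | .botG => 0
  | .conj A B => max A.tmeas B.tmeas
  | .disj A B => max A.tmeas B.tmeas
  | .impl A B => max A.tmeas B.tmeas
  | .pi _ A => A.tmeas
  | .exi _ A => A.tmeas

/-- The logical measure k²(A) of a formula of the enriched language. -/
def GForm.lmeas : GForm → ℕ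
  | .gr _ _ => 0
  | .equiv _ _ => 0
  | .botG => 0
  | .conj A B => max A.lmeas B.lmeas + 1
  | .disj A B => max A.lmeas B.lmeas + 1
  | .impl A B => max A.lmeas B.lmeas + 1
  | .pi _ A => A.lmeas + 1
  | .exi _ A => A.lmeas + 1

/-- The measure μ(A) = (τ(A), k²(A)). -/
def GForm.meas (A : GForm) : ℕ × ℕ := (A.tmeas, A.lmeas)

/-- M_Δ : the set of the measures of the cut-segments of Δ. -/
def measSet (Δ : PTree) : Set (ℕ × ℕ) := {m | ∃ σ A, IsCutSeg Δ σ A ∧ GForm.meas A = m}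

/-- `m` is MAX(M_Δ) (with MAX(∅) = (0,0)). -/
def IsMaxMeas (Δ : PTree) (m : ℕ × ℕ) : Prop :=
  (m ∈ measSet Δ ∨ (measSet Δ = ∅ ∧ m = (0, 0))) ∧ ∀ m' ∈ measSet Δ, mle m' m

/-- `DegreeIs Δ d` : the degree of Δ is `d = (MAX(M_Δ), n)`, where `n` is the sum of the
lengths of the cut-segments of Δ of measure MAX(M_Δ). -/
def DegreeIs (Δ : PTree) (d : (ℕ × ℕ) × ℕ) : Prop :=
  IsMaxMeas Δ d.1 ∧
  ∃ s : Finset (List Pos),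
    (∀ σ, σ ∈ s ↔ ∃ A, IsCutSeg Δ σ A ∧ GForm.meas A = d.1) ∧
    d.2 = s.sum List.length

/-- Lexicographic strict order on degrees. -/
def dlt (d e : (ℕ × ℕ) × ℕ) : Prop := mlt d.1 e.1 ∨ (d.1 = e.1 ∧ d.2 < e.2)

/-- Δ is non-normal iff it contains a cut-segment (equivalently, iff its degree is not
((0,0),0)). -/
def NonNormal (Δ : PTree) : Prop := ∃ σ A, IsCutSeg Δ σ A

/-- A topmost maximal cut-segment (tmcs): a cut-segment of maximal measure such that no
cut-segment of equal measure has its lower edge above its upper edge. -/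
def IsTmcs (Δ : PTree) (σ : List Pos) (A : GForm) : Prop :=
  IsCutSeg Δ σ A ∧ IsMaxMeas Δ (GForm.meas A) ∧
  ∀ σ' A', IsCutSeg Δ σ' A' → GForm.meas A' = GForm.meas A →
    ∀ p q, σ'.getLast? = some p → σ.head? = some q → ¬ StandsAbove p q

/-- Two cut-segments are disjoint iff they share no occurrence. -/
def SegDisjoint (σ₁ σ₂ : List Pos) : Prop := ∀ p ∈ σ₁, p ∉ σ₂

/-- `σ₂` stands to the right of `σ₁`: the lower edge of `σ₁` is side-connected either with
an occurrence in `σ₂` or with a formula occurrence of Δ standing below the lower edge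
of `σ₂`. -/
def RightRel (Δ : PTree) (σ₁ σ₂ : List Pos) : Prop :=
  ∃ p, σ₁.getLast? = some p ∧
    ((∃ q ∈ σ₂, SideConnected Δ p q) ∨
     (∃ q r, σ₂.getLast? = some r ∧ StandsAbove r q ∧ SideConnected Δ p q))

/-- Map a function over all the formulas occurring in a derivation tree
(used for substitution throughout a derivation). -/
def PTree.mapF (f : GForm → GForm) : PTree → PTree
  | .node A r l => .node (f A) r (l.attach.map fun c => c.1.mapF f)
termination_by t => sizeOf t
decreasing_by
  have := List.sizeOf_lt_of_mem c.2
  simp only [PTree.node.sizeOf_spec]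
  omega

/-- Replace the assumption leaves with formula `A` by the derivation `d`. -/
def PTree.replaceAssm : PTree → GForm → PTree → PTree
  | .node B r l, A, d =>
      if r = RuleTag.assum ∧ l = [] ∧ B = A then d
      else .node B r (l.attach.map fun c => c.1.replaceAssm A d)
termination_by t _ _ => sizeOf t
decreasing_by
  have := List.sizeOf_lt_of_mem c.2
  simp only [PTree.node.sizeOf_spec]
  omega

/-- The one-node derivation consisting of an application of the reflexivity axiom to T. -/
def reflLeaf (T : GTerm) : PTree := .node (.equiv T T) .eqRefl []

/-- `Red1 Δ Δ'` : `Δ'` is obtained from `Δ` by one application of a reduction function for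
typing maximal formulas (TMF) or for logically maximal formulas (LMF), or of a permutation
function, possibly inside a subderivation. -/
inductive Red1 : PTree → PTree → Prop
  -- reduction inside a subderivation
  | congr {A r l₁ l₂ t t'} : Red1 t t' →
      Red1 (.node A r (l₁ ++ t :: l₂)) (.node A r (l₁ ++ t' :: l₂))
  -- TMF reductions
  | tmfAnd {A : GForm} {α β : LFormula} {T U : GTerm} {i j : ℕ} {d₁ d₂ minor : PTree} :
      Red1 (.node A .dAnd [.node (.gr (.andI T U) (.and α β)) .andIntro [d₁, d₂], minor])
        ((((minor.mapF fun B => (B.substXi α i T).substXi β j U).replaceAssm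
            (.equiv (.andI T U) (.andI T U)) (reflLeaf (.andI T U))).replaceAssm
            (.gr T α) d₁).replaceAssm (.gr U β) d₂)
  | tmfOrL {A : GForm} {α β : LFormula} {T : GTerm} {i : ℕ} {d₁ m₁ m₂ : PTree} :
      Red1 (.node A .dOr [.node (.gr (.orI true β T) (.or α β)) .orIntroL [d₁], m₁, m₂])
        (((m₁.mapF fun B => B.substXi α i T).replaceAssm
            (.equiv (.orI true β T) (.orI true β T)) (reflLeaf (.orI true β T))).replaceAssm
            (.gr T α) d₁)
  | tmfOrR {A : GForm} {α β : LFormula} {T : GTerm} {j : ℕ} {d₁ m₁ m₂ : PTree} :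
      Red1 (.node A .dOr [.node (.gr (.orI false α T) (.or α β)) .orIntroR [d₁], m₁, m₂])
        (((m₂.mapF fun B => B.substXi β j T).replaceAssm
            (.equiv (.orI false α T) (.orI false α T)) (reflLeaf (.orI false α T))).replaceAssm
            (.gr T β) d₁)
  | tmfImp {A : GForm} {α β : LFormula} {T : GTerm} {k m : ℕ} {d₁ minor : PTree} :
      Red1 (.node A .dImp [.node (.gr (.impI α k T) (.imp α β)) .impIntro [d₁], minor])
        (((minor.mapF fun B => B.substFF β m T).replaceAssm
            (.equiv (.impI α k T) (.impI α k T)) (reflLeaf (.impI α k T))).replaceAssm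
            (.pi (.xi α k) (.impl (.gr (.xi α k) α) (.gr T β)))
            (.node (.pi (.xi α k) (.impl (.gr (.xi α k) α) (.gr T β))) .piI
              [.node (.impl (.gr (.xi α k) α) (.gr T β)) .supI [d₁]]))
  | tmfAll {A : GForm} {α : LFormula} {x m : ℕ} {T : GTerm} {d₁ minor : PTree} :
      Red1 (.node A .dAll [.node (.gr (.allI x T) (.all x α)) .allIntro [d₁], minor])
        (((minor.mapF fun B => B.substFH α x m T).replaceAssm
            (.equiv (.allI x T) (.allI x T)) (reflLeaf (.allI x T))).replaceAssm
            (.pi (.ind x) (.gr T α)) (.node (.pi (.ind x) (.gr T α)) .piI [d₁]))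
  | tmfEx {A : GForm} {α : LFormula} {x j : ℕ} {u : LTerm} {T : GTerm} {d₁ minor : PTree} :
      Red1 (.node A .dEx [.node (.gr (.exI x u α T) (.ex x α)) .exIntro [d₁], minor])
        (((minor.mapF fun B => (B.substInd x u).substXi (α.subst x u) j T).replaceAssm
            (.equiv (.exI x u α T) (.exI x u α T)) (reflLeaf (.exI x u α T))).replaceAssm
            (.gr T (α.subst x u)) d₁)
  -- LMF reductions
  | lmfTimes1 {A B : GForm} {d₁ d₂ : PTree} :
      Red1 (.node A .timesE1 [.node (.conj A B) .timesI [d₁, d₂]]) d₁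
  | lmfTimes2 {A B : GForm} {d₁ d₂ : PTree} :
      Red1 (.node B .timesE2 [.node (.conj A B) .timesI [d₁, d₂]]) d₂
  | lmfPlus1 {A B C : GForm} {d s₁ s₂ : PTree} :
      Red1 (.node C .plusE [.node (.disj A B) .plusI1 [d], s₁, s₂]) (s₁.replaceAssm A d)
  | lmfPlus2 {A B C : GForm} {d s₁ s₂ : PTree} :
      Red1 (.node C .plusE [.node (.disj A B) .plusI2 [d], s₁, s₂]) (s₂.replaceAssm B d)
  | lmfSup {A B : GForm} {d₁ d₂ : PTree} :
      Red1 (.node B .supE [.node (.impl A B) .supI [d₁], d₂]) (d₁.replaceAssm A d₂)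
  | lmfPiInd {A : GForm} {x : ℕ} {u : LTerm} {d : PTree} :
      Red1 (.node (A.substInd x u) .piE [.node (.pi (.ind x) A) .piI [d]])
        (d.mapF (GForm.substInd x u))
  | lmfPiXi {A : GForm} {α : LFormula} {i : ℕ} {τ : GTerm} {d : PTree} :
      Red1 (.node (A.substXi α i τ) .piE [.node (.pi (.xi α i) A) .piI [d]])
        (d.mapF (GForm.substXi α i τ))
  | lmfPiFh {A : GForm} {β : LFormula} {x m : ℕ} {τ : GTerm} {d : PTree} :
      Red1 (.node (A.substFH β x m τ) .piE [.node (.pi (.fh β x m) A) .piI [d]])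
        (d.mapF (GForm.substFH β x m τ))
  | lmfPiFf {A : GForm} {β : LFormula} {m : ℕ} {τ : GTerm} {d : PTree} :
      Red1 (.node (A.substFF β m τ) .piE [.node (.pi (.ff β m) A) .piI [d]])
        (d.mapF (GForm.substFF β m τ))
  | lmfFrakEInd {A B : GForm} {x : ℕ} {u : LTerm} {d s : PTree} :
      d.concl = A.substInd x u →
      Red1 (.node B .frakEE [.node (.exi (.ind x) A) .frakEI [d], s])
        ((s.mapF (GForm.substInd x u)).replaceAssm (A.substInd x u) d)
  | lmfFrakEXi {A B : GForm} {α : LFormula} {i : ℕ} {τ : GTerm} {d s : PTree} :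
      d.concl = A.substXi α i τ →
      Red1 (.node B .frakEE [.node (.exi (.xi α i) A) .frakEI [d], s])
        ((s.mapF (GForm.substXi α i τ)).replaceAssm (A.substXi α i τ) d)
  | lmfFrakEFh {A B : GForm} {β : LFormula} {x m : ℕ} {τ : GTerm} {d s : PTree} :
      d.concl = A.substFH β x m τ →
      Red1 (.node B .frakEE [.node (.exi (.fh β x m) A) .frakEI [d], s])
        ((s.mapF (GForm.substFH β x m τ)).replaceAssm (A.substFH β x m τ) d)
  | lmfFrakEFf {A B : GForm} {β : LFormula} {m : ℕ} {τ : GTerm} {d s : PTree} :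
      d.concl = A.substFF β m τ →
      Red1 (.node B .frakEE [.node (.exi (.ff β m) A) .frakEI [d], s])
        ((s.mapF (GForm.substFF β m τ)).replaceAssm (A.substFF β m τ) d)
  -- permutation functions
  | perm {B S : GForm} {er pr : RuleTag} {maj : PTree} {ms rest : List PTree} :
      er.isMajorElim → pr.isPermElim →
      Red1 (.node B er (.node S pr (maj :: ms) :: rest))
        (.node B pr (maj :: ms.map fun mnr => .node B er (mnr :: rest)))

/-- Δ immediately reduces to Δ' (Δ ⪰ Δ'). -/
def RedEq (Δ Δ' : PTree) : Prop := Δ = Δ' ∨ Red1 Δ Δ'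

/-- Δ reduces to Δ' (Δ ≻ Δ'): there is a finite chain Δ = Δ₁ ⪰ Δ₂ ⪰ ... ⪰ Δₙ = Δ'. -/
def Reduces (Δ Δ' : PTree) : Prop := Relation.ReflTransGen RedEq Δ Δ'

/-- The individual variables occurring unbound in (a formula occurrence of) a
derivation. -/
def treeIndVars (Δ : PTree) : Set ℕ :=
  {x | ∃ p A, formulaAt Δ p = some A ∧ GVar.ind x ∈ A.fvar}

/-- `R` is a correct set of characteristic rules of a system of grounding: the premises and
conclusions of its rules are equivalences, and the rewrite equations are closed under
substitution of (all kinds of) variables by terms. -/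
def CharRuleSet (R : Set (List GForm × GForm)) : Prop :=
  (∀ p c, (p, c) ∈ R →
    ((∀ P ∈ p, ∃ T U : GTerm, P = GForm.equiv T U) ∧ ∃ T U : GTerm, c = GForm.equiv T U)) ∧
  (∀ p c, (p, c) ∈ R →
    (∀ x u, (p.map (GForm.substInd x u), c.substInd x u) ∈ R) ∧
    (∀ α i W, (p.map (GForm.substXi α i W), c.substXi α i W) ∈ R) ∧
    (∀ β x m U, (p.map (GForm.substFH β x m U), c.substFH β x m U) ∈ R) ∧
    (∀ β m U, (p.map (GForm.substFF β m U), c.substFF β m U) ∈ R))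

/-! ### Auxiliary lemmas for Statement 17 -/

/-- Existence of a maximal element of a finite nonempty set w.r.t. a transitive,
irreflexive relation. -/
private theorem exists_max_finset {α : Type _} [DecidableEq α] (Rel : α → α → Prop)
    (htr : ∀ a b c, Rel a b → Rel b c → Rel a c) (hirr : ∀ a, ¬ Rel a a) :
    ∀ (s : Finset α), s.Nonempty → ∃ a ∈ s, ∀ b ∈ s, ¬ Rel a b := by
  intro s
  induction s using Finset.induction_on with
  | empty => rintro ⟨x, hx⟩; cases hx
  | @insert x s hx ih =>
    intro _
    by_cases hs : s.Nonempty
    · obtain ⟨m, hm, hmax⟩ := ih hs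
      by_cases hRm : Rel m x
      · refine ⟨x, Finset.mem_insert_self _ _, ?_⟩
        intro b hb
        rcases Finset.mem_insert.1 hb with rfl | hb
        · exact hirr b
        · intro h; exact hmax b hb (htr _ _ _ hRm h)
      · refine ⟨m, Finset.mem_insert_of_mem hm, ?_⟩
        intro b hb
        rcases Finset.mem_insert.1 hb with rfl | hb
        · exact hRm
        · exact hmax b hb
    · rw [Finset.not_nonempty_iff_eq_empty] at hs
      subst hs
      refine ⟨x, Finset.mem_insert_self _ _, ?_⟩
      intro b hb
      rcases Finset.mem_insert.1 hb with rfl | hb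
      · exact hirr b
      · cases hb

private theorem exists_max_set {α : Type _} (Rel : α → α → Prop)
    (htr : ∀ a b c, Rel a b → Rel b c → Rel a c) (hirr : ∀ a, ¬ Rel a a)
    {s : Set α} (hf : s.Finite) (hne : s.Nonempty) :
    ∃ a ∈ s, ∀ b ∈ s, ¬ Rel a b := by
  classical
  obtain ⟨a, ha, h⟩ := exists_max_finset Rel htr hirr hf.toFinset
    ((Set.Finite.toFinset_nonempty hf).2 hne)
  exact ⟨a, (Set.Finite.mem_toFinset hf).1 ha,
    fun b hb => h b ((Set.Finite.mem_toFinset hf).2 hb)⟩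

/-- `mlt` is transitive. -/
private theorem mlt_trans {a b c : ℕ × ℕ} (h₁ : mlt a b) (h₂ : mlt b c) : mlt a c := by
  rcases a with ⟨a1, a2⟩; rcases b with ⟨b1, b2⟩; rcases c with ⟨c1, c2⟩
  simp only [mlt] at *
  omega

/-- `mlt` is irreflexive. -/
private theorem mlt_irrefl (a : ℕ × ℕ) : ¬ mlt a a := by
  rcases a with ⟨a1, a2⟩; simp [mlt]

/-- `mlt` is trichotomous. -/
private theorem mlt_trichotomy (a b : ℕ × ℕ) : mlt a b ∨ a = b ∨ mlt b a := by
  rcases a with ⟨a1, a2⟩; rcases b with ⟨b1, b2⟩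
  simp only [mlt, Prod.mk.injEq]
  omega

/-- Transitivity of the lexicographic order on positions. -/
private theorem lex_trans : ∀ {l₁ l₂ l₃ : List ℕ},
    List.Lex (· < ·) l₁ l₂ → List.Lex (· < ·) l₂ l₃ → List.Lex (· < ·) l₁ l₃ := by
  intro l₁ l₂ l₃ h₁ h₂
  induction h₂ generalizing l₁ with
  | nil => cases h₁
  | @cons b l₂' l₃' h ih =>
    cases h₁ with
    | nil => exact List.Lex.nil
    | cons h' => exact List.Lex.cons (ih h')
    | rel h' => exact List.Lex.rel h'
  | @rel a l₂' b l₃' hab =>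
    cases h₁ with
    | nil => exact List.Lex.nil
    | cons h' => exact List.Lex.rel hab
    | rel h' => exact List.Lex.rel (h'.trans hab)

/-- Irreflexivity of the lexicographic order on positions. -/
private theorem lex_irrefl : ∀ (l : List ℕ), ¬ List.Lex (· < ·) l l := by
  intro l
  induction l with
  | nil => intro h; cases h
  | cons a t ih =>
    intro h
    cases h with
    | cons h' => exact ih h'
    | rel h' => exact lt_irrefl _ h'

/-- A list lexicographically precedes any proper extension of itself. -/
private theorem lex_append : ∀ (l t : List ℕ), t ≠ [] → List.Lex (· < ·) l (l ++ t) := by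
  intro l
  induction l with
  | nil =>
    intro t ht
    cases t with
    | nil => exact absurd rfl ht
    | cons b t' => exact List.Lex.nil
  | cons a l ih => intro t ht; exact List.Lex.cons (ih t ht)

/-- Divergence at index `|r|` with `0 < m` decides the lexicographic order. -/
private theorem lex_div : ∀ (r : List ℕ) (s s' : List ℕ) {m : ℕ}, 0 < m →
    List.Lex (· < ·) (r ++ 0 :: s) (r ++ m :: s') := by
  intro r
  induction r with
  | nil => intro s s' m hm; exact List.Lex.rel hm
  | cons a r ih => intro s s' m hm; exact List.Lex.cons (ih s s' hm)

/-- The head of a list is a member. -/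
private theorem mem_of_head?' {α : Type _} {l : List α} {a : α} (h : l.head? = some a) :
    a ∈ l := by
  cases l with
  | nil => simp at h
  | cons b t =>
    rw [List.head?_cons, Option.some_inj] at h
    exact h ▸ List.mem_cons_self

/-- The last element of a list is a member. -/
private theorem mem_of_getLast?' {α : Type _} {l : List α} {a : α} (h : l.getLast? = some a) :
    a ∈ l := by
  obtain ⟨hne, h2⟩ := List.mem_getLast?_eq_getLast (x := a) (Option.mem_def.2 h)
  exact h2 ▸ List.getLast_mem hne

/-- In a chain of occurrences each of which extends the next by one index, every member
is a prefix of the head. -/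
private theorem chain'_prefix_head {Rel : Pos → Pos → Prop}
    (hR : ∀ p q, Rel p q → q <+: p) :
    ∀ {l : List Pos}, List.Chain' Rel l → ∀ {h : Pos}, l.head? = some h →
      ∀ q ∈ l, q <+: h := by
  intro l
  induction l with
  | nil => simp
  | cons a t ih =>
    intro hc h hh q hq
    rw [List.head?_cons, Option.some_inj] at hh
    subst hh
    rcases List.mem_cons.1 hq with rfl | hq
    · exact List.prefix_refl _
    · cases t with
      | nil => cases hq
      | cons b t' =>
        have hba : b <+: a := hR _ _ (List.isChain_cons_cons.1 hc).1
        exact (ih (List.isChain_cons_cons.1 hc).2 rfl q hq).trans hba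

/-- The set of positions at which a subderivation occurs is finite. -/
private theorem posSet_finite : ∀ (Δ : PTree), Set.Finite {p : Pos | (Δ.sub p).isSome}
  | .node A r l => by
    have IH : ∀ t ∈ l, Set.Finite {p : Pos | (t.sub p).isSome} :=
      fun t ht => posSet_finite t
    apply Set.Finite.subset (s := insert ([] : Pos)
      (⋃ k ∈ Finset.range l.length,
        (fun p => k :: p) '' (⋃ t ∈ {t | t ∈ l}, {p : Pos | (PTree.sub t p).isSome})))
    · apply Set.Finite.insert
      apply Set.Finite.biUnion (Finset.range l.length).finite_toSet
      intro k _
      exact Set.Finite.image _ (Set.Finite.biUnion (List.finite_toSet l) IH)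
    · intro p hp
      simp only [Set.mem_setOf_eq] at hp
      match p with
      | [] => exact Set.mem_insert _ _
      | k :: p' =>
        rw [PTree.sub] at hp
        cases hgl : l[k]? with
        | none => rw [hgl] at hp; simp at hp
        | some c =>
          rw [hgl] at hp
          simp at hp
          obtain ⟨hk, hkc⟩ := List.getElem?_eq_some_iff.1 hgl
          have hcl : c ∈ l := hkc ▸ List.getElem_mem hk
          refine Set.mem_insert_iff.2 (Or.inr ?_)
          refine Set.mem_biUnion (Finset.mem_coe.2 (Finset.mem_range.2 hk)) ?_
          exact ⟨p', Set.mem_biUnion hcl hp, rfl⟩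
termination_by Δ => sizeOf Δ
decreasing_by
  have := List.sizeOf_lt_of_mem ht
  simp only [PTree.node.sizeOf_spec]
  omega

/-- Every member of a cut-segment carries a position of the derivation. -/
private theorem cutSeg_pos {Δ : PTree} {σ : List Pos} {A : GForm} (h : IsCutSeg Δ σ A)
    {p : Pos} (hp : p ∈ σ) : (Δ.sub p).isSome := by
  have := h.2.1 p hp
  unfold formulaAt at this
  cases hs : Δ.sub p with
  | none => rw [hs] at this; simp at this
  | some t => simp

/-- The set of measures of cut-segments of a derivation is finite. -/
private theorem measSet_finite (Δ : PTree) : (measSet Δ).Finite := by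
  apply Set.Finite.subset ((posSet_finite Δ).image
    (fun p => GForm.meas ((formulaAt Δ p).getD GForm.botG)))
  rintro m ⟨σ, A, hcs, rfl⟩
  obtain ⟨p, ri, hhead, -⟩ := hcs.2.2.1
  have hpσ : p ∈ σ := mem_of_head?' hhead
  have hpA : formulaAt Δ p = some A := hcs.2.1 p hpσ
  exact ⟨p, cutSeg_pos hcs hpσ, by simp [hpA]⟩

/-- The prefix relation derived from the chain condition of a cut-segment. -/
private theorem cutSeg_rel_prefix (Δ : PTree) :
    ∀ p q : Pos, ((∃ k, k ≠ 0 ∧ q ++ [k] = p) ∧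
      ∃ r', tagAt Δ q = some r' ∧ RuleTag.isPermElim r') → q <+: p := by
  rintro p q ⟨⟨k, -, rfl⟩, -⟩
  exact ⟨[k], rfl⟩

/-- Every member of a cut-segment is a prefix of its upper edge. -/
private theorem cutSeg_prefix_head {Δ : PTree} {σ : List Pos} {A : GForm}
    (h : IsCutSeg Δ σ A) {hd : Pos} (hh : σ.head? = some hd) {q : Pos} (hq : q ∈ σ) :
    q <+: hd :=
  chain'_prefix_head (cutSeg_rel_prefix Δ) h.2.2.2 hh q hq

/-- existence of a topmost rightmost maximal cut-segment.  If Δ is a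
non-normal derivation in a system of grounding Σ, then there is a topmost maximal
cut-segment σ of Δ such that for no cut-segment σ* in Δ is it the case that μ(σ*) = μ(σ)
and the lower edge of σ is side-connected with an occurrence in σ* or with a formula
occurrence in Δ standing below the lower edge of σ*. -/
theorem topmost_rightmost_maximal_cut_segment_exists (base : ℕ → LFormula)
    (R : Set (List GForm × GForm)) (hR : CharRuleSet R) (Γ : Set GForm) (Δ : PTree)
    (hval : Valid base R Γ Δ) (hnn : NonNormal Δ) :
    ∃ σ A, IsTmcs Δ σ A ∧
      ¬ ∃ σ' A', IsCutSeg Δ σ' A' ∧ GForm.meas A' = GForm.meas A ∧ RightRel Δ σ σ' := by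
  classical
  obtain ⟨σ₀, A₀, hcs₀⟩ := hnn
  have hMne : (measSet Δ).Nonempty := ⟨GForm.meas A₀, σ₀, A₀, hcs₀, rfl⟩
  obtain ⟨M, hM, hMmax⟩ := exists_max_set mlt (fun _ _ _ => mlt_trans) mlt_irrefl (measSet_finite Δ) hMne
  have hIsMax : IsMaxMeas Δ M := by
    refine ⟨Or.inl hM, ?_⟩
    intro m' hm'
    rcases mlt_trichotomy m' M with h | h | h
    · exact Or.inr h
    · exact Or.inl h
    · exact absurd h (hMmax m' hm')
  -- the set of upper edges of the cut-segments of maximal measure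
  have hHfin : Set.Finite {h : Pos | ∃ σ A, IsCutSeg Δ σ A ∧ GForm.meas A = M ∧
      σ.head? = some h} := by
    apply Set.Finite.subset (posSet_finite Δ)
    rintro h ⟨σ, A, hcs, -, hh⟩
    exact cutSeg_pos hcs (mem_of_head?' hh)
  have hHne : Set.Nonempty {h : Pos | ∃ σ A, IsCutSeg Δ σ A ∧ GForm.meas A = M ∧
      σ.head? = some h} := by
    obtain ⟨σ, A, hcs, hmA⟩ := hM
    obtain ⟨p, ri, hhead, -⟩ := hcs.2.2.1
    exact ⟨p, σ, A, hcs, hmA, hhead⟩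
  obtain ⟨h₀, hh₀H, hh₀max⟩ := exists_max_set (List.Lex (· < ·)) (fun _ _ _ => lex_trans) lex_irrefl hHfin hHne
  obtain ⟨σ, A, hcs, hmA, hhead⟩ := hh₀H
  -- no cut-segment of the same measure has its upper edge lexicographically above h₀
  have hnolex : ∀ σ' A' (h' : Pos), IsCutSeg Δ σ' A' → GForm.meas A' = GForm.meas A →
      σ'.head? = some h' → ¬ List.Lex (· < ·) h₀ h' := by
    intro σ' A' h' hcs' hm' hh'
    exact hh₀max h' ⟨σ', A', hcs', by rw [hm', hmA], hh'⟩
  refine ⟨σ, A, ⟨hcs, by rw [hmA]; exact hIsMax, ?_⟩, ?_⟩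
  · -- topmost: no same-measure cut-segment has its lower edge above the upper edge of σ
    intro σ' A' hcs' hm' p q hlast hq hSA
    obtain ⟨h', ri', hh', -⟩ := hcs'.2.2.1
    have hq0 : q = h₀ := by rw [hq] at hhead; exact Option.some_inj.1 hhead
    obtain ⟨hne, hpre⟩ := hSA
    have hph' : p <+: h' := cutSeg_prefix_head hcs' hh' (mem_of_getLast?' hlast)
    have hq_h' : q <+: h' := hpre.trans hph'
    have hlt : q.length < h'.length := by
      have h1 : q.length ≤ p.length := hpre.length_le
      have h2 : p.length ≤ h'.length := hph'.length_le
      have h3 : q.length ≠ p.length := fun he => hne (hpre.eq_of_length he)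
      omega
    obtain ⟨t, rfl⟩ := hq_h'
    have ht : t ≠ [] := by
      intro h
      subst h
      simp at hlt
    subst hq0
    exact hnolex σ' A' _ hcs' hm' hh' (lex_append q t ht)
  · -- rightmost: no same-measure cut-segment stands to the right of σ
    rintro ⟨σ', A', hcs', hm', p, hplast, hdisj⟩
    obtain ⟨p₁, ri, hhead₁, htag₁, hri, q0, pr, re, hlast0, hq0eq, htagpr, hmatch⟩ :=
      hcs.2.2.1
    have hppr : p = pr ++ [0] := by
      rw [hplast] at hlast0
      exact (Option.some_inj.1 hlast0) ▸ hq0eq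
    obtain ⟨h', ri', hh', -⟩ := hcs'.2.2.1
    have hph₀ : p <+: h₀ := cutSeg_prefix_head hcs hhead (mem_of_getLast?' hplast)
    have key : ∃ m, m ≠ 0 ∧ (pr ++ [m]) <+: h' := by
      rcases hdisj with ⟨q, hqσ', hSC⟩ | ⟨q, r', hr'last, hSAr, hSC⟩
      · obtain ⟨-, -, r, k, m, hkm, hpe, hqe⟩ := hSC
        obtain ⟨hrpr, hk0⟩ := List.append_inj' (hpe.symm.trans hppr) rfl
        have hk : k = 0 := by simpa using hk0
        refine ⟨m, fun hm => hkm (hk.trans hm.symm), ?_⟩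
        have : q <+: h' := cutSeg_prefix_head hcs' hh' hqσ'
        rwa [hqe, hrpr] at this
      · obtain ⟨-, -, r, k, m, hkm, hpe, hqe⟩ := hSC
        obtain ⟨hrpr, hk0⟩ := List.append_inj' (hpe.symm.trans hppr) rfl
        have hk : k = 0 := by simpa using hk0
        refine ⟨m, fun hm => hkm (hk.trans hm.symm), ?_⟩
        have h1 : q <+: r' := hSAr.2
        have h2 : r' <+: h' := cutSeg_prefix_head hcs' hh' (mem_of_getLast?' hr'last)
        have : q <+: h' := h1.trans h2
        rwa [hqe, hrpr] at this
    obtain ⟨m, hm0, hpre'⟩ := key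
    obtain ⟨s, hs⟩ := hph₀
    obtain ⟨s', hs'⟩ := hpre'
    have hlex : List.Lex (· < ·) h₀ h' := by
      rw [← hs, ← hs', hppr, List.append_assoc, List.append_assoc]
      simp only [List.singleton_append]
      exact lex_div pr s s' (Nat.pos_of_ne_zero hm0)
    exact hnolex σ' A' h' hcs' hm' hh' hlex

end

end Grounding
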